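/- Let S_t = Σ_{i=1}^t Z_i where Z_1, Z_2, … are i.i.d. Gaussian with mean s, 0 < s < ∞, and variance σ², 0 < σ² < ∞. Let 0 < ℓ < ∞ and μ = inf{t ≥ 1 : S_t ≥ ℓ}. Then for every z with 0 ≤ z < ℓ/s, P(μ < ℓ/s − z) ≤ exp( − s² z² / (2σ² (ℓ/s − z)) ). -/

import Mathlib

open MeasureTheory ProbabilityTheory Filter ENNReal

section Aux
open Real NNReal

set_option linter.unusedSectionVars false

lemma gauss_pdf_mul_exp (m : ℝ) (v : ℝ≥0) (hv : v ≠ 0) (t x : ℝ) :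
    gaussianPDFReal m v x * Real.exp (t * x)
      = Real.exp (t * m + (v : ℝ) * t ^ 2 / 2) * gaussianPDFReal (m + t * v) v x := by
  have hv' : (0:ℝ) < (v:ℝ) := by positivity
  rw [gaussianPDFReal, gaussianPDFReal]
  have key : -(x - m) ^ 2 / (2 * (v:ℝ)) + t * x
      = (t * m + (v : ℝ) * t ^ 2 / 2) + -(x - (m + t * (v:ℝ))) ^ 2 / (2 * (v:ℝ)) := by
    field_simp
    ring
  calc (√(2 * π * (v:ℝ)))⁻¹ * Real.exp (-(x - m) ^ 2 / (2 * (v:ℝ))) * Real.exp (t * x)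
      = (√(2 * π * (v:ℝ)))⁻¹ * Real.exp (-(x - m) ^ 2 / (2 * (v:ℝ)) + t * x) := by
        rw [Real.exp_add]; ring
    _ = (√(2 * π * (v:ℝ)))⁻¹ *
        Real.exp ((t * m + (v : ℝ) * t ^ 2 / 2) + -(x - (m + t * (v:ℝ))) ^ 2 / (2 * (v:ℝ))) := by
        rw [key]
    _ = _ := by rw [Real.exp_add]; ring

lemma integral_exp_gaussianReal (m : ℝ) (v : ℝ≥0) (hv : v ≠ 0) (t : ℝ) :
    ∫ x, Real.exp (t * x) ∂(gaussianReal m v) = Real.exp (t * m + (v : ℝ) * t ^ 2 / 2) := by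
  rw [gaussianReal_of_var_ne_zero _ hv]
  have hmeas : Measurable fun x => (gaussianPDFReal m v x).toNNReal :=
    (measurable_gaussianPDFReal m v).real_toNNReal
  have hpdf : (gaussianPDF m v) = fun x => ((gaussianPDFReal m v x).toNNReal : ℝ≥0∞) := by
    funext x; rfl
  rw [hpdf, integral_withDensity_eq_integral_smul hmeas]
  have : ∀ x, (gaussianPDFReal m v x).toNNReal • Real.exp (t * x)
      = Real.exp (t * m + (v : ℝ) * t ^ 2 / 2) * gaussianPDFReal (m + t * v) v x := by
    intro x
    rw [NNReal.smul_def, Real.coe_toNNReal _ (gaussianPDFReal_nonneg m v x), smul_eq_mul,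
      gauss_pdf_mul_exp m v hv t x]
  simp_rw [this]
  rw [integral_const_mul, integral_gaussianPDFReal_eq_one _ hv, mul_one]

variable {Ω : Type*} [MeasureSpace Ω] [IsProbabilityMeasure (ℙ : Measure Ω)]

lemma integrable_exp_of_gaussian (X : Ω → ℝ) (hX : Measurable X) (m : ℝ) (v : ℝ≥0)
    (hv : v ≠ 0) (hmap : Measure.map X ℙ = gaussianReal m v) (t : ℝ) :
    Integrable (fun ω => Real.exp (t * X ω)) ℙ := by
  have hg : Measurable fun x : ℝ => Real.exp (t * x) := (measurable_id.const_mul t).exp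
  have h1 : Integrable (fun x : ℝ => Real.exp (t * x)) (gaussianReal m v) := by
    rw [gaussianReal_of_var_ne_zero _ hv]
    have hmeas : Measurable fun x => (gaussianPDFReal m v x).toNNReal :=
      (measurable_gaussianPDFReal m v).real_toNNReal
    have hpdf : (gaussianPDF m v) = fun x => ((gaussianPDFReal m v x).toNNReal : ℝ≥0∞) := by
      funext x; rfl
    rw [hpdf, integrable_withDensity_iff_integrable_smul hmeas]
    have : ∀ x, (gaussianPDFReal m v x).toNNReal • Real.exp (t * x)
        = Real.exp (t * m + (v : ℝ) * t ^ 2 / 2) * gaussianPDFReal (m + t * v) v x := by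
      intro x
      rw [NNReal.smul_def, Real.coe_toNNReal _ (gaussianPDFReal_nonneg m v x), smul_eq_mul,
        gauss_pdf_mul_exp m v hv t x]
    simp_rw [this]
    exact (integrable_gaussianPDFReal _ _).const_mul _
  rw [← hmap] at h1
  exact (integrable_map_measure hg.aestronglyMeasurable hX.aemeasurable).mp h1

lemma integral_exp_of_gaussian (X : Ω → ℝ) (hX : Measurable X) (m : ℝ) (v : ℝ≥0)
    (hv : v ≠ 0) (hmap : Measure.map X ℙ = gaussianReal m v) (t : ℝ) :
    ∫ ω, Real.exp (t * X ω) ∂ℙ = Real.exp (t * m + (v : ℝ) * t ^ 2 / 2) := by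
  have hg : Measurable fun x : ℝ => Real.exp (t * x) := (measurable_id.const_mul t).exp
  rw [← integral_exp_gaussianReal m v hv t, ← hmap,
    integral_map hX.aemeasurable hg.aestronglyMeasurable]

lemma exp_sum_int (Z : ℕ → Ω → ℝ) (hmeas : ∀ i, Measurable (Z i))
    (hindep : iIndepFun Z ℙ)
    (s σ : ℝ) (hσ : 0 < σ)
    (hdist : ∀ i, Measure.map (Z i) ℙ = gaussianReal s (Real.toNNReal (σ ^ 2)))
    (lam : ℝ) (u : Finset ℕ) :
    Integrable (fun ω => Real.exp (lam * ∑ i ∈ u, Z i ω)) ℙ := by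
  have hv : (Real.toNNReal (σ ^ 2)) ≠ 0 := by
    simp only [ne_eq, Real.toNNReal_eq_zero, not_le]; positivity
  have h := hindep.integrable_exp_mul_sum (t := lam) hmeas (s := u)
    (fun i _ => integrable_exp_of_gaussian (Z i) (hmeas i) s _ hv (hdist i) lam)
  simpa only [Finset.sum_apply] using h

lemma exp_sum_integral (Z : ℕ → Ω → ℝ) (hmeas : ∀ i, Measurable (Z i))
    (hindep : iIndepFun Z ℙ)
    (s σ : ℝ) (hσ : 0 < σ)
    (hdist : ∀ i, Measure.map (Z i) ℙ = gaussianReal s (Real.toNNReal (σ ^ 2)))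
    (lam : ℝ) (u : Finset ℕ) :
    ∫ ω, Real.exp (lam * ∑ i ∈ u, Z i ω) ∂ℙ
      = Real.exp (u.card * (lam * s + lam ^ 2 * σ ^ 2 / 2)) := by
  have hv : (Real.toNNReal (σ ^ 2)) ≠ 0 := by
    simp only [ne_eq, Real.toNNReal_eq_zero, not_le]; positivity
  have hvr : ((Real.toNNReal (σ ^ 2) : ℝ≥0) : ℝ) = σ ^ 2 :=
    Real.coe_toNNReal _ (by positivity)
  have h := hindep.mgf_sum (t := lam) hmeas u
  simp only [mgf, Finset.sum_apply] at h
  rw [h]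
  have hZ : ∀ i : ℕ, ∫ ω, Real.exp (lam * Z i ω) ∂ℙ
      = Real.exp (lam * s + lam ^ 2 * σ ^ 2 / 2) := by
    intro i
    rw [integral_exp_of_gaussian (Z i) (hmeas i) s _ hv (hdist i) lam, hvr]
    ring_nf
  simp only [hZ]
  rw [Finset.prod_const, ← Real.exp_nat_mul]

lemma chernoff_max (Z : ℕ → Ω → ℝ) (hmeas : ∀ i, Measurable (Z i))
    (hindep : iIndepFun Z ℙ)
    (s σ : ℝ) (hs : 0 < s) (hσ : 0 < σ)
    (hdist : ∀ i, Measure.map (Z i) ℙ = gaussianReal s (Real.toNNReal (σ ^ 2)))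
    (ℓ : ℝ) (hℓ : 0 < ℓ) (n : ℕ) (lam : ℝ) (hlam : 0 ≤ lam) :
    ℙ {ω | ∃ t, 1 ≤ t ∧ t ≤ n ∧ ℓ ≤ ∑ i ∈ Finset.range t, Z i ω}
      ≤ ENNReal.ofReal
        (Real.exp (-(lam * ℓ) + n * (lam * s + lam ^ 2 * σ ^ 2 / 2))) := by
  classical
  set c : ℝ := lam * s + lam ^ 2 * σ ^ 2 / 2 with hcdef
  have hc : 0 ≤ c := by positivity
  set W : ℕ → Ω → ℝ := fun t ω => ∑ i ∈ Finset.range t, Z i ω with hWdef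
  have hWmeas : ∀ t, Measurable (W t) := fun t =>
    Finset.measurable_sum _ fun i _ => hmeas i
  set A : ℕ → Set Ω := fun t =>
    {ω | ℓ ≤ W t ω} ∩ ⋂ j ∈ Finset.range t, {ω | W j ω < ℓ} with hAdef
  have hAmeas : ∀ t, MeasurableSet (A t) := by
    intro t
    refine (measurableSet_le measurable_const (hWmeas t)).inter ?_
    exact MeasurableSet.biInter (Finset.range t).countable_toSet
      fun j _ => measurableSet_lt (hWmeas j) measurable_const
  -- disjointness
  have hkey : ∀ a b : ℕ, a < b → ∀ ω, ω ∈ A a → ω ∈ A b → False := by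
    intro a b hab ω ha hb
    have h1 : ℓ ≤ W a ω := ha.1
    have h2 : W a ω < ℓ := by
      have := hb.2
      simp only [Set.mem_iInter] at this
      exact this a (Finset.mem_range.mpr hab)
    linarith
  have hdisj : (↑(Finset.Icc 1 n) : Set ℕ).PairwiseDisjoint A := by
    intro a _ b _ hab
    refine Set.disjoint_left.mpr fun ω hωa hωb => ?_
    rcases lt_or_gt_of_ne hab with h | h
    · exact hkey a b h ω hωa hωb
    · exact hkey b a h ω hωb hωa
  -- event identification
  have hE : {ω | ∃ t, 1 ≤ t ∧ t ≤ n ∧ ℓ ≤ ∑ i ∈ Finset.range t, Z i ω}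
      = ⋃ t ∈ Finset.Icc 1 n, A t := by
    ext ω
    simp only [Set.mem_setOf_eq, Set.mem_iUnion, Finset.mem_Icc]
    constructor
    · rintro ⟨t, ht1, htn, hW⟩
      have hex : ∃ j, ℓ ≤ W j ω := ⟨t, hW⟩
      refine ⟨Nat.find hex, ⟨⟨?_, le_trans (Nat.find_le hW) htn⟩, ?_, ?_⟩⟩
      · rcases Nat.eq_zero_or_pos (Nat.find hex) with h0 | h0
        · exfalso
          have := Nat.find_spec hex
          rw [h0] at this
          simp only [W, Finset.range_zero, Finset.sum_empty] at this
          linarith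
        · exact h0
      · exact Nat.find_spec hex
      · simp only [Set.mem_iInter, Finset.mem_range]
        intro j hj
        exact not_le.mp (Nat.find_min hex hj)
    · rintro ⟨t, ⟨ht1, htn⟩, hmem⟩
      exact ⟨t, ht1, htn, hmem.1⟩
  -- per-term lower bound
  have key1 : ∀ t ∈ Finset.Icc 1 n,
      Real.exp (lam * ℓ) * (ℙ (A t)).toReal ≤ ∫ ω in A t, Real.exp (lam * W n ω) ∂ℙ := by
    intro t ht
    rw [Finset.mem_Icc] at ht
    obtain ⟨ht1, htn⟩ := ht
    set X : Ω → ℝ := (A t).indicator fun ω => Real.exp (lam * W t ω) with hXdef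
    set Y : Ω → ℝ := fun ω => Real.exp (lam * ∑ i ∈ Finset.Ico t n, Z i ω) with hYdef
    -- rewrite the set integral as ∫ X * Y
    have hsplit : ∫ ω in A t, Real.exp (lam * W n ω) ∂ℙ = ∫ ω, X ω * Y ω ∂ℙ := by
      rw [← integral_indicator (hAmeas t)]
      congr 1
      funext ω
      by_cases hω : ω ∈ A t
      · rw [Set.indicator_of_mem hω, hXdef, Set.indicator_of_mem hω]
        have hsum : W t ω + ∑ i ∈ Finset.Ico t n, Z i ω = W n ω := by
          simpa [W] using Finset.sum_range_add_sum_Ico (fun i => Z i ω) htn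
        rw [hYdef, ← Real.exp_add, ← mul_add, hsum]
      · rw [Set.indicator_of_notMem hω, hXdef, Set.indicator_of_notMem hω, zero_mul]
    -- independence
    have hdisjsets : Disjoint (Finset.range t) (Finset.Ico t n) := by
      refine Finset.disjoint_left.mpr fun a ha hb => ?_
      rw [Finset.mem_range] at ha
      rw [Finset.mem_Ico] at hb
      omega
    have base := hindep.indepFun_finset (Finset.range t) (Finset.Ico t n) hdisjsets hmeas
    set G : (↥(Finset.range t) → ℝ) → ℕ → ℝ := fun y j =>
      ∑ i ∈ Finset.range j, if h : i ∈ Finset.range t then y ⟨i, h⟩ else 0 with hGdef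
    have hGmeas : ∀ j, Measurable fun y => G y j := by
      intro j
      refine Finset.measurable_sum _ fun i _ => ?_
      by_cases h : i ∈ Finset.range t
      · simp only [h, dif_pos]
        exact measurable_pi_apply _
      · simp only [h, dif_neg, not_false_iff]
        exact measurable_const
    have hGZ : ∀ ω, ∀ j ≤ t, G (fun i => Z i.1 ω) j = W j ω := by
      intro ω j hj
      refine Finset.sum_congr rfl fun i hi => ?_
      rw [Finset.mem_range] at hi
      rw [dif_pos (Finset.mem_range.mpr (lt_of_lt_of_le hi hj))]
    set B : Set (↥(Finset.range t) → ℝ) :=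
      {y | ℓ ≤ G y t} ∩ ⋂ j ∈ Finset.range t, {y | G y j < ℓ} with hBdef
    have hBmeas : MeasurableSet B := by
      refine (measurableSet_le measurable_const (hGmeas t)).inter ?_
      exact MeasurableSet.biInter (Finset.range t).countable_toSet
        fun j _ => measurableSet_lt (hGmeas j) measurable_const
    set φ : (↥(Finset.range t) → ℝ) → ℝ :=
      B.indicator fun y => Real.exp (lam * G y t) with hφdef
    have hφmeas : Measurable φ :=
      Measurable.indicator ((measurable_const.mul (hGmeas t)).exp) hBmeas
    set ψ : (↥(Finset.Ico t n) → ℝ) → ℝ :=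
      fun y => Real.exp (lam * ∑ i ∈ (Finset.Ico t n).attach, y i) with hψdef
    have hψmeas : Measurable ψ :=
      (measurable_const.mul (Finset.measurable_sum _ fun i _ => measurable_pi_apply i)).exp
    have hφcomp : (φ ∘ fun ω (i : ↥(Finset.range t)) => Z i ω) = X := by
      funext ω
      have hmemiff : ((fun i : ↥(Finset.range t) => Z i.1 ω) ∈ B) ↔ ω ∈ A t := by
        simp only [hBdef, hAdef, Set.mem_inter_iff, Set.mem_setOf_eq, Set.mem_iInter,
          Finset.mem_range]
        constructor
        · rintro ⟨h1, h2⟩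
          rw [hGZ ω t le_rfl] at h1
          refine ⟨h1, fun j hj => ?_⟩
          have := h2 j hj
          rwa [hGZ ω j (le_of_lt hj)] at this
        · rintro ⟨h1, h2⟩
          rw [← hGZ ω t le_rfl] at h1
          refine ⟨h1, fun j hj => ?_⟩
          rw [hGZ ω j (le_of_lt hj)]
          exact h2 j hj
      simp only [Function.comp_apply, hφdef, hXdef]
      by_cases hω : ω ∈ A t
      · rw [Set.indicator_of_mem (hmemiff.mpr hω), Set.indicator_of_mem hω,
          hGZ ω t le_rfl]
      · rw [Set.indicator_of_notMem (fun h => hω (hmemiff.mp h)),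
          Set.indicator_of_notMem hω]
    have hψcomp : (ψ ∘ fun ω (i : ↥(Finset.Ico t n)) => Z i ω) = Y := by
      funext ω
      simp only [Function.comp_apply, hψdef, hYdef]
      congr 1
      rw [← Finset.sum_attach (Finset.Ico t n) (fun i => Z i ω)]
    have hXY : IndepFun X Y ℙ := by
      have := base.comp hφmeas hψmeas
      rwa [hφcomp, hψcomp] at this
    -- measurability of X, Y
    have hXmeas : Measurable X :=
      Measurable.indicator ((measurable_const.mul (hWmeas t)).exp) (hAmeas t)
    have hYmeas : Measurable Y :=
      (measurable_const.mul (Finset.measurable_sum _ fun i _ => hmeas i)).exp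
    have hmul : ∫ ω, X ω * Y ω ∂ℙ = (∫ ω, X ω ∂ℙ) * ∫ ω, Y ω ∂ℙ :=
      hXY.integral_fun_mul_eq_mul_integral hXmeas.aestronglyMeasurable hYmeas.aestronglyMeasurable
    have hYint : ∫ ω, Y ω ∂ℙ = Real.exp ((Finset.Ico t n).card * c) :=
      exp_sum_integral Z hmeas hindep s σ hσ hdist lam (Finset.Ico t n)
    have hYge : (1 : ℝ) ≤ ∫ ω, Y ω ∂ℙ := by
      rw [hYint]
      exact Real.one_le_exp (by positivity)
    have hXge : Real.exp (lam * ℓ) * (ℙ (A t)).toReal ≤ ∫ ω, X ω ∂ℙ := by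
      rw [hXdef, integral_indicator (hAmeas t)]
      refine le_of_eq_of_le (by rw [measureReal_def, smul_eq_mul, mul_comm])
        (setIntegral_ge_of_const_le (hAmeas t) (measure_ne_top ℙ _) ?_ ?_)
      · intro ω hω
        exact Real.exp_le_exp.mpr (mul_le_mul_of_nonneg_left hω.1 hlam)
      · exact (exp_sum_int Z hmeas hindep s σ hσ hdist lam (Finset.range t)).integrableOn
    calc Real.exp (lam * ℓ) * (ℙ (A t)).toReal
        = Real.exp (lam * ℓ) * (ℙ (A t)).toReal * 1 := by ring
      _ ≤ (∫ ω, X ω ∂ℙ) * ∫ ω, Y ω ∂ℙ := by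
          refine mul_le_mul hXge hYge zero_le_one (le_trans (by positivity) hXge)
      _ = ∫ ω, X ω * Y ω ∂ℙ := hmul.symm
      _ = ∫ ω in A t, Real.exp (lam * W n ω) ∂ℙ := hsplit.symm
  -- sum of set integrals bounded by total integral
  have hintn : Integrable (fun ω => Real.exp (lam * W n ω)) ℙ :=
    exp_sum_int Z hmeas hindep s σ hσ hdist lam (Finset.range n)
  have key2 : ∑ t ∈ Finset.Icc 1 n, ∫ ω in A t, Real.exp (lam * W n ω) ∂ℙ
      ≤ Real.exp (n * c) := by
    rw [← integral_biUnion_finset (Finset.Icc 1 n) (fun t _ => hAmeas t) hdisj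
      (fun t _ => hintn.integrableOn)]
    calc ∫ ω in ⋃ t ∈ Finset.Icc 1 n, A t, Real.exp (lam * W n ω) ∂ℙ
        ≤ ∫ ω, Real.exp (lam * W n ω) ∂ℙ :=
          setIntegral_le_integral hintn (Filter.Eventually.of_forall fun ω => (Real.exp_pos _).le)
      _ = Real.exp (n * c) := by
          rw [exp_sum_integral Z hmeas hindep s σ hσ hdist lam (Finset.range n),
            Finset.card_range]
  -- combine
  have hsum : Real.exp (lam * ℓ) * ∑ t ∈ Finset.Icc 1 n, (ℙ (A t)).toReal
      ≤ Real.exp (n * c) := by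
    rw [Finset.mul_sum]
    exact le_trans (Finset.sum_le_sum key1) key2
  have hfinal : ∑ t ∈ Finset.Icc 1 n, (ℙ (A t)).toReal
      ≤ Real.exp (-(lam * ℓ) + n * c) := by
    have hpos : (0 : ℝ) < Real.exp (lam * ℓ) := Real.exp_pos _
    rw [← le_div_iff₀' hpos] at hsum
    calc ∑ t ∈ Finset.Icc 1 n, (ℙ (A t)).toReal
        ≤ Real.exp (n * c) / Real.exp (lam * ℓ) := hsum
      _ = Real.exp (-(lam * ℓ) + n * c) := by
          rw [← Real.exp_sub]; ring_nf
  calc ℙ {ω | ∃ t, 1 ≤ t ∧ t ≤ n ∧ ℓ ≤ ∑ i ∈ Finset.range t, Z i ω}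
      = ∑ t ∈ Finset.Icc 1 n, ℙ (A t) := by
        rw [hE, measure_biUnion_finset hdisj fun t _ => hAmeas t]
    _ = ENNReal.ofReal (∑ t ∈ Finset.Icc 1 n, (ℙ (A t)).toReal) := by
        rw [ENNReal.ofReal_sum_of_nonneg fun t _ => ENNReal.toReal_nonneg]
        exact Finset.sum_congr rfl fun t _ => (ENNReal.ofReal_toReal (measure_ne_top _ _)).symm
    _ ≤ ENNReal.ofReal (Real.exp (-(lam * ℓ) + n * c)) := ENNReal.ofReal_le_ofReal hfinal

lemma mu_zero_null (Z : ℕ → Ω → ℝ) (hmeas : ∀ i, Measurable (Z i))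
    (hindep : iIndepFun Z ℙ)
    (s σ : ℝ) (hs : 0 < s) (hσ : 0 < σ)
    (hdist : ∀ i, Measure.map (Z i) ℙ = gaussianReal s (Real.toNNReal (σ ^ 2)))
    (ℓ : ℝ) :
    ℙ {ω | ∀ t, 1 ≤ t → ∑ i ∈ Finset.range t, Z i ω < ℓ} = 0 := by
  set N := {ω | ∀ t, 1 ≤ t → ∑ i ∈ Finset.range t, Z i ω < ℓ} with hN
  set lam : ℝ := -(s / σ ^ 2) with hlam
  have hlamneg : lam ≤ 0 := by
    rw [hlam]; simp only [neg_nonpos]; positivity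
  have hc : lam * s + lam ^ 2 * σ ^ 2 / 2 = -(s ^ 2 / (2 * σ ^ 2)) := by
    rw [hlam]; field_simp; ring
  have hbound : ∀ t : ℕ, 1 ≤ t → (ℙ N).toReal
      ≤ Real.exp (s / σ ^ 2 * ℓ) * Real.exp (t * -(s ^ 2 / (2 * σ ^ 2))) := by
    intro t ht
    have hsub : N ⊆ {ω | (fun ω => ∑ i ∈ Finset.range t, Z i ω) ω ≤ ℓ} :=
      fun ω hω => le_of_lt (hω t ht)
    have h1 : (ℙ N).toReal ≤ (ℙ {ω | (fun ω => ∑ i ∈ Finset.range t, Z i ω) ω ≤ ℓ}).toReal :=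
      ENNReal.toReal_mono (measure_ne_top _ _) (measure_mono hsub)
    have h2 := measure_le_le_exp_mul_mgf (μ := ℙ)
      (X := fun ω => ∑ i ∈ Finset.range t, Z i ω) ℓ hlamneg
      (exp_sum_int Z hmeas hindep s σ hσ hdist lam (Finset.range t))
    have hmgf : mgf (fun ω => ∑ i ∈ Finset.range t, Z i ω) ℙ lam
        = Real.exp (t * -(s ^ 2 / (2 * σ ^ 2))) := by
      rw [mgf, exp_sum_integral Z hmeas hindep s σ hσ hdist lam (Finset.range t),
        Finset.card_range, hc]
    rw [hmgf] at h2
    refine le_trans h1 (le_trans h2 ?_)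
    have : -lam * ℓ = s / σ ^ 2 * ℓ := by rw [hlam]; ring
    rw [this]
  have htend : Filter.Tendsto
      (fun t : ℕ => Real.exp (s / σ ^ 2 * ℓ) * Real.exp (t * -(s ^ 2 / (2 * σ ^ 2))))
      Filter.atTop (nhds 0) := by
    have hr : Real.exp (-(s ^ 2 / (2 * σ ^ 2))) < 1 := by
      rw [Real.exp_lt_one_iff]
      have : (0:ℝ) < s ^ 2 / (2 * σ ^ 2) := by positivity
      linarith
    have hr0 : (0:ℝ) ≤ Real.exp (-(s ^ 2 / (2 * σ ^ 2))) := (Real.exp_pos _).le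
    have hpow : ∀ t : ℕ, Real.exp (t * -(s ^ 2 / (2 * σ ^ 2)))
        = Real.exp (-(s ^ 2 / (2 * σ ^ 2))) ^ t := fun t => Real.exp_nat_mul _ t
    simp_rw [hpow]
    rw [show (0:ℝ) = Real.exp (s / σ ^ 2 * ℓ) * 0 by ring]
    exact (tendsto_pow_atTop_nhds_zero_of_lt_one hr0 hr).const_mul _
  have hle : (ℙ N).toReal ≤ 0 := by
    refine ge_of_tendsto htend ?_
    filter_upwards [Filter.eventually_ge_atTop 1] with t ht
    exact hbound t ht
  have h0 : (ℙ N).toReal = 0 := le_antisymm hle ENNReal.toReal_nonneg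
  rcases (ENNReal.toReal_eq_zero_iff _).mp h0 with h | h
  · exact h
  · exact absurd h (measure_ne_top _ _)

end Aux

/-- **Lemma 1.i, lower-deviation bound.** For a Gaussian random walk `S` with i.i.d.
increments of mean `s > 0` and variance `σ² > 0`, the first-passage time
`μ = inf{t ≥ 1 : S_t ≥ ℓ}` over a level `ℓ > 0` satisfies, for `0 ≤ z < ℓ/s`,
`P(μ < ℓ/s − z) ≤ exp(−s²z²/(2σ²(ℓ/s − z)))`. -/
theorem passage_time_lower_deviation
    {Ω : Type*} [MeasureSpace Ω] [IsProbabilityMeasure (ℙ : Measure Ω)]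
    (Z : ℕ → Ω → ℝ)
    (hmeas : ∀ i, Measurable (Z i))
    (hindep : iIndepFun Z ℙ)
    (s σ : ℝ) (hs : 0 < s) (hσ : 0 < σ)
    (hdist : ∀ i, Measure.map (Z i) ℙ = gaussianReal s (Real.toNNReal (σ ^ 2)))
    (ℓ : ℝ) (hℓ : 0 < ℓ)
    (S : ℕ → Ω → ℝ) (hS : ∀ t ω, S t ω = ∑ i ∈ Finset.range t, Z i ω)
    (μ : Ω → ℕ) (hμ : ∀ ω, μ ω = sInf {t : ℕ | 1 ≤ t ∧ ℓ ≤ S t ω}) :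
    ∀ z : ℝ, 0 ≤ z → z < ℓ / s →
      ℙ {ω | (μ ω : ℝ) < ℓ / s - z}
        ≤ ENNReal.ofReal (Real.exp (-(s ^ 2 * z ^ 2) / (2 * σ ^ 2 * (ℓ / s - z)))) := by
  intro z hz hzT
  set T : ℝ := ℓ / s - z with hT
  have hT0 : 0 < T := by rw [hT]; linarith
  set N := {ω | ∀ t, 1 ≤ t → ∑ i ∈ Finset.range t, Z i ω < ℓ} with hN
  have hNnull : ℙ N = 0 := mu_zero_null Z hmeas hindep s σ hs hσ hdist ℓ
  have hμN : ∀ ω, μ ω = 0 → ω ∈ N := by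
    intro ω h0 t ht
    by_contra hcon
    push_neg at hcon
    have hne : {t : ℕ | 1 ≤ t ∧ ℓ ≤ S t ω}.Nonempty := ⟨t, ht, by rw [hS]; exact hcon⟩
    have hmem := Nat.sInf_mem hne
    rw [← hμ ω, h0] at hmem
    exact absurd hmem.1 (by norm_num)
  by_cases hT1 : T ≤ 1
  · have hsub : {ω | (μ ω : ℝ) < T} ⊆ N := by
      intro ω hω
      have h1 : (μ ω : ℝ) < 1 := lt_of_lt_of_le hω hT1
      have h2 : μ ω = 0 := Nat.lt_one_iff.mp (by exact_mod_cast h1)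
      exact hμN ω h2
    calc ℙ {ω | (μ ω : ℝ) < T} ≤ ℙ N := measure_mono hsub
      _ = 0 := hNnull
      _ ≤ _ := zero_le
  · push_neg at hT1
    set n : ℕ := ⌈T⌉₊ - 1 with hn
    have hceil2 : 1 < ⌈T⌉₊ := Nat.lt_ceil.mpr (by exact_mod_cast hT1)
    have hn1 : 1 ≤ n := by omega
    have hcast : (n : ℝ) = (⌈T⌉₊ : ℝ) - 1 := by
      rw [hn]
      push_cast [Nat.cast_sub (by omega : 1 ≤ ⌈T⌉₊)]
      ring
    have hnT : (n : ℝ) < T := by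
      have := Nat.ceil_lt_add_one (le_of_lt hT0)
      rw [hcast]; linarith
    have hn0 : (0 : ℝ) < (n : ℝ) := by exact_mod_cast hn1
    set E := {ω | ∃ t, 1 ≤ t ∧ t ≤ n ∧ ℓ ≤ ∑ i ∈ Finset.range t, Z i ω} with hE
    have hsub : {ω | (μ ω : ℝ) < T} ⊆ N ∪ E := by
      intro ω hω
      rcases Nat.eq_zero_or_pos (μ ω) with h0 | h0
      · exact Or.inl (hμN ω h0)
      · right
        have hne : {t : ℕ | 1 ≤ t ∧ ℓ ≤ S t ω}.Nonempty := by
          by_contra hcon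
          rw [Set.not_nonempty_iff_eq_empty] at hcon
          have : μ ω = 0 := by rw [hμ ω, hcon, Nat.sInf_empty]
          omega
        have hmem := Nat.sInf_mem hne
        rw [← hμ ω] at hmem
        have h2 : μ ω ≤ n := by
          have : μ ω < ⌈T⌉₊ := Nat.lt_ceil.mpr hω
          omega
        exact ⟨μ ω, hmem.1, h2, by rw [← hS]; exact hmem.2⟩
    set lam : ℝ := (ℓ - s * n) / (σ ^ 2 * n) with hlamdef
    have hsT : s * T = ℓ - s * z := by rw [hT]; field_simp
    have ha : s * z ≤ ℓ - s * n := by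
      have h1 : s * (n : ℝ) < s * T := mul_lt_mul_of_pos_left hnT hs
      linarith
    have ha0 : (0 : ℝ) ≤ ℓ - s * n := le_trans (by positivity) ha
    have hlam0 : 0 ≤ lam := div_nonneg ha0 (by positivity)
    have hcher := chernoff_max Z hmeas hindep s σ hs hσ hdist ℓ hℓ n lam hlam0
    have hexp1 : -(lam * ℓ) + n * (lam * s + lam ^ 2 * σ ^ 2 / 2)
        = -((ℓ - s * n) ^ 2 / (2 * σ ^ 2 * n)) := by
      rw [hlamdef]; field_simp; ring
    have hexp2 : -((ℓ - s * n) ^ 2 / (2 * σ ^ 2 * (n:ℝ)))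
        ≤ -(s ^ 2 * z ^ 2) / (2 * σ ^ 2 * T) := by
      rw [neg_div]
      rw [neg_le_neg_iff, div_le_div_iff₀ (by positivity) (by positivity)]
      have h1 : (s * z) ^ 2 ≤ (ℓ - s * n) ^ 2 := by
        apply sq_le_sq'
        · nlinarith
        · exact ha
      nlinarith [mul_le_mul_of_nonneg_right h1 (show (0:ℝ) ≤ 2 * σ ^ 2 * n by positivity),
        mul_le_mul_of_nonneg_left hnT.le (show (0:ℝ) ≤ (ℓ - s * n) ^ 2 * (2 * σ ^ 2) by positivity)]
    calc ℙ {ω | (μ ω : ℝ) < T} ≤ ℙ (N ∪ E) := measure_mono hsub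
      _ ≤ ℙ N + ℙ E := measure_union_le _ _
      _ = ℙ E := by rw [hNnull, zero_add]
      _ ≤ ENNReal.ofReal
          (Real.exp (-(lam * ℓ) + n * (lam * s + lam ^ 2 * σ ^ 2 / 2))) := hcher
      _ ≤ ENNReal.ofReal (Real.exp (-(s ^ 2 * z ^ 2) / (2 * σ ^ 2 * T))) := by
          apply ENNReal.ofReal_le_ofReal
          apply Real.exp_le_exp.mpr
          rw [hexp1]
          exact hexp2
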